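/- Let p > 2 be a prime number and suppose positive integers x, y, z satisfy (4x − p)yz = x(y + z). If p ≡ 1 (mod 4), then the Legendre symbols satisfy (yz/p) = ((y+z)/p) = −1. -/

import Mathlib

open NumberTheorySymbols

private lemma leg_congr' {p : ℕ} [Fact p.Prime] {a b : ℤ} (h : (p:ℤ) ∣ b - a) :
    legendreSym p a = legendreSym p b := by
  have hz : ((a : ZMod p)) = (b : ZMod p) := by
    rw [ZMod.intCast_eq_intCast_iff]
    exact Int.modEq_iff_dvd.mpr h
  simp only [legendreSym]
  rw [hz]

private lemma aux_jac_one {g Y Q : ℕ} (hg : 0 < g) (hdvd : g ∣ Y) (hQ : Q + 1 = 4 * Y) :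
    J((g : ℤ) | Q) = 1 := by
  obtain ⟨k, b, hb, rfl⟩ := Nat.exists_eq_two_pow_mul_odd hg.ne'
  have hb1 : b % 2 = 1 := Nat.odd_iff.mp hb
  have hQ2 : Q % 2 = 1 := by omega
  have hQodd : Odd Q := Nat.odd_iff.mpr hQ2
  have hQ4 : Q % 4 = 3 := by omega
  have hbY : b ∣ Y := (dvd_mul_left b (2 ^ k)).trans hdvd
  have hcast : ((2 ^ k * b : ℕ) : ℤ) = (2 : ℤ) ^ k * ((b : ℕ) : ℤ) := by push_cast; ring
  rw [hcast, jacobiSym.mul_left, jacobiSym.pow_left]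
  have h2 : J((2:ℤ) | Q) ^ k = 1 := by
    rcases Nat.eq_zero_or_pos k with hk | hk
    · rw [hk, pow_zero]
    · have h2Y : 2 ∣ Y := ((dvd_pow_self 2 hk.ne').mul_right b).trans hdvd
      have hQ8 : Q % 8 = 7 := by omega
      rw [jacobiSym.at_two hQodd, ZMod.χ₈_nat_eq_if_mod_eight]
      simp [hQ2, hQ8]
  have hbQ : J((b:ℤ) | Q) = 1 := by
    have hQZ : (Q : ℤ) + 1 = 4 * (Y : ℤ) := by exact_mod_cast hQ
    have hbYZ : (b : ℤ) ∣ (Y : ℤ) := Int.natCast_dvd_natCast.mpr hbY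
    have hdvd' : (b : ℤ) ∣ (-1 : ℤ) - (Q : ℤ) := by
      have : (-1 : ℤ) - (Q : ℤ) = -(4 * (Y:ℤ)) := by linarith
      rw [this]
      exact dvd_neg.mpr (hbYZ.mul_left 4)
    have hQb : J((Q:ℤ) | b) = (-1:ℤ) ^ (b / 2) := by
      have h1 : J((Q:ℤ) | b) = J((-1 : ℤ) | b) :=
        jacobiSym.mod_left' (Int.modEq_iff_dvd.mpr hdvd')
      rw [h1, jacobiSym.at_neg_one hb, ZMod.χ₄_eq_neg_one_pow hb1]
    rw [jacobiSym.quadratic_reciprocity hb hQodd, hQb, ← pow_add]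
    apply Even.neg_one_pow
    have h1 : b / 2 * (Q / 2) + b / 2 = b / 2 * (Q / 2 + 1) := by ring
    have h2 : Even (Q / 2 + 1) := by
      have : Q / 2 % 2 = 1 := by omega
      exact Nat.even_iff.mpr (by omega)
    rw [h1]
    exact h2.mul_left _
  rw [h2, hbQ, mul_one]

/-- Let `p > 2` be a prime with `p ≡ 1 (mod 4)` and suppose positive integers
`x, y, z` satisfy `(4x - p) y z = x (y + z)`. Then `(yz/p) = ((y+z)/p) = -1`. -/
theorem stmt_11 (p : ℕ) [Fact p.Prime] (hp2 : 2 < p) (hp1 : p % 4 = 1)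
    (x y z : ℤ) (hx : 0 < x) (hy : 0 < y) (hz : 0 < z)
    (heq : (4 * x - (p : ℤ)) * y * z = x * (y + z)) :
    legendreSym p (y * z) = -1 ∧ legendreSym p (y + z) = -1 := by
  have hp := (Fact.out : p.Prime)
  have hpZ : (2:ℤ) < (p:ℤ) := by exact_mod_cast hp2
  have hpodd : (p:ℤ) % 2 = 1 := by
    have := hp.eq_one_or_self_of_dvd
    have h2 : ¬ (2 ∣ p) := fun h => by
      rcases (Nat.Prime.eq_one_or_self_of_dvd hp 2 h : _) with h' | h' <;> omega
    omega
  set e : ℤ := 4 * x - (p:ℤ) with he_def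
  have hyz : (0:ℤ) < y * z := mul_pos hy hz
  have hyz2 : y + z ≤ 2 * (y * z) := by nlinarith
  have heq' : e * (y * z) = x * (y + z) := by rw [he_def]; linear_combination heq
  have he_pos : 0 < e := by nlinarith
  have h2x : 2 * x ≤ (p:ℤ) := by nlinarith
  have hxlt : x < (p:ℤ) := by linarith
  have hpx : ¬ (p:ℤ) ∣ x := fun hdvd => absurd (Int.le_of_dvd hx hdvd) (not_le.mpr hxlt)
  have hprime : Prime (p:ℤ) := Nat.prime_iff_prime_int.mp hp
  have hcop : IsCoprime (p:ℤ) x := hprime.coprime_iff_not_dvd.mpr hpx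
  have hkey0 : (p:ℤ) * (y * z) = x * (4 * (y * z) - y - z) := by linear_combination -heq
  obtain ⟨w, hw⟩ : x ∣ y * z :=
    (hcop.symm).dvd_of_dvd_mul_left ⟨4 * (y * z) - y - z, hkey0⟩
  have hw_pos : 0 < w := by nlinarith
  have hxne : x ≠ 0 := hx.ne'
  have hw1 : (p:ℤ) * w = 4 * (y * z) - y - z := by
    apply mul_left_cancel₀ hxne
    linear_combination hkey0 - (p:ℤ) * hw
  have hw2 : e * w = y + z := by
    apply mul_left_cancel₀ hxne
    linear_combination heq' - e * hw
  set m : ℤ := e * y - x with hm_def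
  have hm : w * m = y ^ 2 := by
    apply mul_left_cancel₀ hxne
    linear_combination (x * y) * hw2 + x * hw
  have hy2pos : (0:ℤ) < y ^ 2 := by positivity
  have hm_pos : 0 < m := by nlinarith
  -- p does not divide y nor z
  have hsize : ∀ hy' : (p:ℤ) ∣ y, ∀ hz' : (p:ℤ) ∣ z, False := by
    intro hy' hz'
    have hyp : (p:ℤ) ≤ y := Int.le_of_dvd hy hy'
    have hzp : (p:ℤ) ≤ z := Int.le_of_dvd hz hz'
    have h1 : (p:ℤ) * y ≤ z * y := mul_le_mul_of_nonneg_right hzp hy.le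
    have h2 : (p:ℤ) * z ≤ y * z := mul_le_mul_of_nonneg_right hyp hz.le
    have h3 : (p:ℤ) * e * w ≤ 2 * (x * w) := by nlinarith
    have h4 : (p:ℤ) * e ≤ 2 * x := le_of_mul_le_mul_right (by linarith) hw_pos
    have he_ge : (1:ℤ) ≤ e := he_pos
    have h5 : (p:ℤ) ≤ (p:ℤ) * e := by nlinarith
    have h6 : 2 * x = (p:ℤ) := by linarith
    omega
  have hpy : ¬ (p:ℤ) ∣ y := by
    intro hdy
    refine hsize hdy ?_
    have hzeq : z = 4 * (y * z) - y - (p:ℤ) * w := by linarith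
    rw [hzeq]
    have h4yz : (p:ℤ) ∣ 4 * (y * z) := by
      have h' : 4 * (y * z) = y * (4 * z) := by ring
      rw [h']; exact hdy.mul_right _
    exact dvd_sub (dvd_sub h4yz hdy) (dvd_mul_right _ _)
  have hpz : ¬ (p:ℤ) ∣ z := by
    intro hdz
    refine hsize ?_ hdz
    have hyeq : y = 4 * (y * z) - z - (p:ℤ) * w := by linarith
    rw [hyeq]
    have h4yz : (p:ℤ) ∣ 4 * (y * z) := by
      have : 4 * (y * z) = z * (4 * y) := by ring
      rw [this]; exact hdz.mul_right _
    exact dvd_sub (dvd_sub h4yz hdz) (dvd_mul_right _ _)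
  -- non-divisibility facts
  have hp2' : ¬ (p:ℤ) ∣ 2 := fun h => absurd (Int.le_of_dvd (by norm_num) h) (by linarith)
  have hp4' : ¬ (p:ℤ) ∣ 4 := fun h => by
    rcases (hprime.dvd_mul.mp (show (p:ℤ) ∣ 2 * 2 by norm_num at h ⊢; exact h)) with h' | h' <;>
      exact hp2' h'
  have hpyz : ¬ (p:ℤ) ∣ y * z := fun h => by
    rcases hprime.dvd_mul.mp h with h' | h' <;> [exact hpy h'; exact hpz h']
  have hpw : ¬ (p:ℤ) ∣ w := fun h => hpyz (hw ▸ h.mul_left x)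
  have hpm : ¬ (p:ℤ) ∣ m := fun h => by
    have : (p:ℤ) ∣ y ^ 2 := hm ▸ h.mul_left w
    exact hpy (hprime.dvd_of_dvd_pow this)
  have hpe : ¬ (p:ℤ) ∣ e := fun h => by
    have h4x : (p:ℤ) ∣ 4 * x := by
      have : 4 * x = e + (p:ℤ) := by rw [he_def]; ring
      rw [this]; exact dvd_add h (dvd_refl _)
    rcases hprime.dvd_mul.mp h4x with h' | h' <;> [exact hp4' h'; exact hpx h']
  -- residue nonvanishing
  have toZMod : ∀ a : ℤ, ¬ (p:ℤ) ∣ a → ((a : ZMod p)) ≠ 0 := fun a ha h =>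
    ha ((ZMod.intCast_zmod_eq_zero_iff_dvd a p).mp h)
  have hy0 := toZMod y hpy
  have hx0 := toZMod x hpx
  have hw0 := toZMod w hpw
  have hm0 := toZMod m hpm
  have he0 := toZMod e hpe
  have h20 := toZMod 2 hp2'
  -- Legendre facts
  have h4leg : legendreSym p 4 = 1 := by
    have h4 : (4:ℤ) = 2 ^ 2 := by norm_num
    rw [h4]; exact legendreSym.sq_one' p h20
  have step1 : legendreSym p (y * z) = legendreSym p x * legendreSym p w := by
    rw [hw, legendreSym.mul]
  have step2 : legendreSym p w * legendreSym p m = 1 := by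
    rw [← legendreSym.mul, hm]; exact legendreSym.sq_one' p hy0
  have step3 : legendreSym p w = legendreSym p m := by
    rcases legendreSym.eq_one_or_neg_one p hw0 with h1 | h1 <;>
      rcases legendreSym.eq_one_or_neg_one p hm0 with h2 | h2 <;>
        rw [h1, h2] at step2 ⊢ <;> omega
  have step4 : legendreSym p x * legendreSym p m = legendreSym p (4 * y - 1) := by
    have hc : legendreSym p (16 * (x * m)) = legendreSym p (e ^ 2 * (4 * y - 1)) := by
      apply leg_congr'
      refine ⟨-16 * x * y + 8 * x + 4 * (p:ℤ) * y - (p:ℤ), ?_⟩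
      rw [hm_def, he_def]; ring
    have h16 : legendreSym p 16 = 1 := by
      have h162 : (16:ℤ) = 4 ^ 2 := by norm_num
      rw [h162]; exact legendreSym.sq_one' p (toZMod 4 hp4')
    have he2 : legendreSym p (e ^ 2) = 1 := legendreSym.sq_one' p he0
    calc legendreSym p x * legendreSym p m = legendreSym p (16 * (x * m)) := by
          rw [legendreSym.mul, h16, legendreSym.mul, one_mul]
      _ = legendreSym p (e ^ 2 * (4 * y - 1)) := hc
      _ = legendreSym p (4 * y - 1) := by rw [legendreSym.mul, he2, one_mul]
  have hyzq : legendreSym p (y * z) = legendreSym p (4 * y - 1) := by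
    rw [step1, step3, step4]
  have hsum : legendreSym p (y + z) = legendreSym p (y * z) := by
    have hc : legendreSym p (y + z) = legendreSym p (4 * (y * z)) := by
      apply leg_congr'
      exact ⟨w, by linarith⟩
    rw [hc, legendreSym.mul, h4leg, one_mul]
  -- now the Jacobi computation
  set Q : ℕ := (4 * y - 1).toNat with hQ_def
  have hQtoZ : ((Q : ℕ) : ℤ) = 4 * y - 1 := Int.toNat_of_nonneg (by linarith)
  have hQ2 : Q % 2 = 1 := by omega
  have hQodd : Odd Q := Nat.odd_iff.mpr hQ2
  have hQ4 : Q % 4 = 3 := by omega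
  have hkeyQ : ((Q:ℕ):ℤ) * (y + z) = 4 * y ^ 2 + (p:ℤ) * w := by
    rw [hQtoZ]; linear_combination -hw1
  have hyQ : IsCoprime y ((Q:ℕ):ℤ) := by
    rw [hQtoZ]; exact ⟨4, -1, by ring⟩
  have h2Q : IsCoprime (2:ℤ) ((Q:ℕ):ℤ) := by
    rw [hQtoZ]; exact ⟨2 * y, -1, by ring⟩
  have hy2Q : IsCoprime (y ^ 2) ((Q:ℕ):ℤ) := hyQ.pow_left
  have hwQ : IsCoprime w ((Q:ℕ):ℤ) :=
    hy2Q.of_isCoprime_of_dvd_left ⟨m, hm.symm⟩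
  have hPW : J((p:ℤ) * w | Q) = -1 := by
    have hcongr : J((p:ℤ) * w | Q) = J(-1 * (2 * y) ^ 2 | Q) := by
      apply jacobiSym.mod_left'
      apply Int.ModEq.symm
      apply Int.modEq_iff_dvd.mpr
      exact ⟨y + z, by linear_combination -hkeyQ⟩
    have h2y : Int.gcd (2 * y) Q = 1 :=
      Int.isCoprime_iff_gcd_eq_one.mp (h2Q.mul_left hyQ)
    rw [hcongr, jacobiSym.mul_left, jacobiSym.at_neg_one hQodd,
      ZMod.χ₄_nat_three_mod_four hQ4, jacobiSym.sq_one' h2y]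
    ring
  have hJmul : J((p:ℤ) | Q) * J(w | Q) = -1 := by rw [← jacobiSym.mul_left]; exact hPW
  -- J(w | Q) = 1 via square decomposition
  have hJw : J(w | Q) = 1 := by
    set g : ℕ := Int.gcd w m with hg_def
    have hg_pos : 0 < g := Int.gcd_pos_of_ne_zero_left m hw_pos.ne'
    have hgz : ((g:ℕ):ℤ) ≠ 0 := by exact_mod_cast hg_pos.ne'
    obtain ⟨w1, hw1'⟩ : ((g:ℕ):ℤ) ∣ w := Int.gcd_dvd_left w m
    obtain ⟨m1, hm1'⟩ : ((g:ℕ):ℤ) ∣ m := Int.gcd_dvd_right w m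
    have hcop1 : IsCoprime w1 m1 := by
      rw [Int.isCoprime_iff_gcd_eq_one]
      have h1 : w1 = w / (g:ℤ) := by rw [hw1', Int.mul_ediv_cancel_left _ hgz]
      have h2 : m1 = m / (g:ℤ) := by rw [hm1', Int.mul_ediv_cancel_left _ hgz]
      rw [h1, h2]
      exact Int.gcd_div_gcd_div_gcd hg_pos
    have hgy : ((g:ℕ):ℤ) ∣ y := by
      have hsq : ((g:ℕ):ℤ) ^ 2 ∣ y ^ 2 := by
        rw [← hm]
        exact ⟨w1 * m1, by rw [hw1', hm1']; ring⟩
      exact (Int.pow_dvd_pow_iff two_ne_zero).mp hsq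
    have hprod : w1 * m1 = (y / (g:ℤ)) ^ 2 := by
      obtain ⟨y1, hy1'⟩ := hgy
      have hy1d : y / ((g:ℕ):ℤ) = y1 := by rw [hy1', Int.mul_ediv_cancel_left _ hgz]
      rw [hy1d]
      apply mul_left_cancel₀ (pow_ne_zero 2 hgz)
      have := hm
      rw [hw1', hm1', hy1'] at this
      linear_combination this
    obtain ⟨v, hv⟩ := Int.sq_of_isCoprime hcop1 hprod
    have hgzpos : (0:ℤ) < ((g:ℕ):ℤ) := by exact_mod_cast hg_pos
    have hw1_pos : 0 < w1 := by
      rcases lt_trichotomy w1 0 with h | h | h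
      · exfalso
        have : ((g:ℕ):ℤ) * w1 ≤ 0 := mul_nonpos_iff.mpr (Or.inl ⟨hgzpos.le, h.le⟩)
        linarith [hw1' ▸ hw_pos]
      · exfalso; rw [h, mul_zero] at hw1'; exact hw_pos.ne' hw1'
      · exact h
    have hw1sq : w1 = v ^ 2 := by
      rcases hv with h | h
      · exact h
      · exfalso; rw [h] at hw1_pos; linarith [sq_nonneg v]
    have hvQ : Int.gcd v Q = 1 := by
      rw [← Int.isCoprime_iff_gcd_eq_one]
      have hv2 : v ^ 2 ∣ w := ⟨(g:ℤ), by rw [hw1', hw1sq]; ring⟩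
      exact (hwQ.of_isCoprime_of_dvd_left hv2).of_isCoprime_of_dvd_left
        (dvd_pow_self v two_ne_zero)
    have hwgv : w = ((g:ℕ):ℤ) * v ^ 2 := by rw [hw1', hw1sq]
    rw [hwgv, jacobiSym.mul_left, jacobiSym.sq_one' hvQ, mul_one]
    -- apply aux lemma with Y = y.toNat
    have hgy' : g ∣ y.toNat := by
      rw [← Int.natCast_dvd_natCast]
      rwa [Int.toNat_of_nonneg hy.le]
    have hYQ : Q + 1 = 4 * y.toNat := by
      have h1 : ((y.toNat : ℕ) : ℤ) = y := Int.toNat_of_nonneg hy.le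
      omega
    exact aux_jac_one hg_pos hgy' hYQ
  have hJp : J((p:ℤ) | Q) = -1 := by rwa [hJw, mul_one] at hJmul
  have hrec : J(((p:ℕ):ℤ) | Q) = J(((Q:ℕ):ℤ) | p) :=
    jacobiSym.quadratic_reciprocity_one_mod_four hp1 hQodd
  have hfinal : legendreSym p (4 * y - 1) = -1 := by
    rw [jacobiSym.legendreSym.to_jacobiSym, ← hQtoZ, ← hrec, hJp]
  constructor
  · rw [hyzq]; exact hfinal
  · rw [hsum, hyzq]; exact hfinal
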